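/- Let G be a finite simple graph containing a triangle formed by edges e₁ = v v₁, e₂ = v v₂, e₃ = v₁v₂. Let G_{1,2} = G with e₃ removed, G₁ = G with e₂ and e₃ removed, G₂ = G with e₁ and e₃ removed, and G₃ = G with e₁ and e₂ removed. Then X_G = 2·X_{G_{1,2}} + X_{G₃} − X_{G₁} − X_{G₂}. -/

import Mathlib

open SimpleGraph

/- The chromatic symmetric function of `G`, specialized to the `n` variables
`x_0, …, x_{n-1}`: the sum, over all proper colorings `κ : V → Fin n`, of
`∏_{v} x_{κ v}`.  Two graphs have the same chromatic symmetric function iff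
these specializations agree for every `n`. -/
open scoped Classical in
noncomputable def csf {V : Type*} [Fintype V] (G : SimpleGraph V) (n : ℕ) :
    MvPolynomial (Fin n) ℤ :=
  ∑ κ : V → Fin n,
    if ∀ u w, G.Adj u w → κ u ≠ κ w then ∏ v, MvPolynomial.X (κ v) else 0

private lemma single_split {V α : Type*} (G : SimpleGraph V) {x y : V} (hxy : G.Adj x y)
    (κ : V → α) :
    (∀ u w, G.Adj u w → κ u ≠ κ w) ↔
      ((∀ u w, (G.deleteEdges {s(x, y)}).Adj u w → κ u ≠ κ w) ∧ κ x ≠ κ y) := by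
  constructor
  · intro h
    exact ⟨fun u w hu => h u w (SimpleGraph.deleteEdges_adj.1 hu).1, h x y hxy⟩
  · rintro ⟨h1, hne⟩ u w hadj
    by_cases he : s(u, w) = s(x, y)
    · rw [Sym2.eq_iff] at he
      rcases he with ⟨rfl, rfl⟩ | ⟨rfl, rfl⟩
      · exact hne
      · exact hne.symm
    · exact h1 u w (SimpleGraph.deleteEdges_adj.2 ⟨hadj, by simpa using he⟩)

private lemma insert_split {V α : Type*} (G : SimpleGraph V) (s : Set (Sym2 V)) {x y : V}
    (hxy : G.Adj x y) (hs : s(x, y) ∉ s) (κ : V → α) :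
    (∀ u w, (G.deleteEdges s).Adj u w → κ u ≠ κ w) ↔
      ((∀ u w, (G.deleteEdges (insert s(x, y) s)).Adj u w → κ u ≠ κ w) ∧ κ x ≠ κ y) := by
  constructor
  · intro h
    refine ⟨fun u w hu => ?_, h x y (SimpleGraph.deleteEdges_adj.2 ⟨hxy, hs⟩)⟩
    obtain ⟨hG, hmem⟩ := SimpleGraph.deleteEdges_adj.1 hu
    exact h u w (SimpleGraph.deleteEdges_adj.2
      ⟨hG, fun hm => hmem (Set.mem_insert_iff.2 (Or.inr hm))⟩)
  · rintro ⟨h1, hne⟩ u w hadj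
    obtain ⟨hG, hmem⟩ := SimpleGraph.deleteEdges_adj.1 hadj
    by_cases he : s(u, w) = s(x, y)
    · rw [Sym2.eq_iff] at he
      rcases he with ⟨rfl, rfl⟩ | ⟨rfl, rfl⟩
      · exact hne
      · exact hne.symm
    · exact h1 u w (SimpleGraph.deleteEdges_adj.2
        ⟨hG, fun hm => (Set.mem_insert_iff.1 hm).elim he hmem⟩)

/-- Let `e₁ = v v₁`, `e₂ = v v₂`, `e₃ = v₁ v₂` form a triangle of `G`.  With
`G_{1,2} = G - e₃`, `G₁ = G - e₂ - e₃`, `G₂ = G - e₁ - e₃`, `G₃ = G - e₁ - e₂`,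
we have `X_G = 2 X_{G_{1,2}} + X_{G₃} - X_{G₁} - X_{G₂}`. -/
theorem csf_wedge_erase {V : Type*} [Fintype V] (G : SimpleGraph V)
    (v v₁ v₂ : V) (h₁ : G.Adj v v₁) (h₂ : G.Adj v v₂) (h₃ : G.Adj v₁ v₂) :
    ∀ n, csf G n =
      2 * csf (G.deleteEdges {s(v₁, v₂)}) n +
        csf (G.deleteEdges {s(v, v₁), s(v, v₂)}) n -
        csf (G.deleteEdges {s(v, v₂), s(v₁, v₂)}) n -
        csf (G.deleteEdges {s(v, v₁), s(v₁, v₂)}) n := by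
  classical
  have hvv₁ : v ≠ v₁ := h₁.ne
  have hvv₂ : v ≠ v₂ := h₂.ne
  have hv₁v₂ : v₁ ≠ v₂ := h₃.ne
  -- distinctness of the three edges
  have e13 : s(v, v₁) ∉ ({s(v₁, v₂)} : Set (Sym2 V)) := by
    simp only [Set.mem_singleton_iff, Sym2.eq_iff]; tauto
  have e312 : s(v₁, v₂) ∉ ({s(v, v₁), s(v, v₂)} : Set (Sym2 V)) := by
    simp only [Set.mem_insert_iff, Set.mem_singleton_iff, Sym2.eq_iff]; tauto
  have e213 : s(v, v₂) ∉ ({s(v, v₁), s(v₁, v₂)} : Set (Sym2 V)) := by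
    simp only [Set.mem_insert_iff, Set.mem_singleton_iff, Sym2.eq_iff]; tauto
  have e123 : s(v, v₁) ∉ ({s(v, v₂), s(v₁, v₂)} : Set (Sym2 V)) := by
    simp only [Set.mem_insert_iff, Set.mem_singleton_iff, Sym2.eq_iff]; tauto
  -- set identities normalizing to the canonical triple
  have hs2 : (insert s(v, v₂) ({s(v, v₁), s(v₁, v₂)} : Set (Sym2 V))) =
      {s(v, v₁), s(v, v₂), s(v₁, v₂)} := by
    ext e; simp only [Set.mem_insert_iff, Set.mem_singleton_iff]; tauto
  have hs3 : (insert s(v₁, v₂) ({s(v, v₁), s(v, v₂)} : Set (Sym2 V))) =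
      {s(v, v₁), s(v, v₂), s(v₁, v₂)} := by
    ext e; simp only [Set.mem_insert_iff, Set.mem_singleton_iff]; tauto
  intro n
  simp only [csf]
  rw [Finset.mul_sum, sub_sub, eq_sub_iff_add_eq, ← Finset.sum_add_distrib,
    ← Finset.sum_add_distrib, ← Finset.sum_add_distrib]
  refine Finset.sum_congr rfl fun κ _ => ?_
  have hP2 : (∀ u w, (G.deleteEdges {s(v, v₁), s(v₁, v₂)}).Adj u w → κ u ≠ κ w) ↔
      ((∀ u w, (G.deleteEdges {s(v, v₁), s(v, v₂), s(v₁, v₂)}).Adj u w → κ u ≠ κ w) ∧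
        κ v ≠ κ v₂) := by
    rw [insert_split G _ h₂ e213 κ, hs2]
  have hP1 : (∀ u w, (G.deleteEdges {s(v, v₂), s(v₁, v₂)}).Adj u w → κ u ≠ κ w) ↔
      ((∀ u w, (G.deleteEdges {s(v, v₁), s(v, v₂), s(v₁, v₂)}).Adj u w → κ u ≠ κ w) ∧
        κ v ≠ κ v₁) := by
    rw [insert_split G _ h₁ e123 κ]
  have hP3 : (∀ u w, (G.deleteEdges {s(v, v₁), s(v, v₂)}).Adj u w → κ u ≠ κ w) ↔
      ((∀ u w, (G.deleteEdges {s(v, v₁), s(v, v₂), s(v₁, v₂)}).Adj u w → κ u ≠ κ w) ∧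
        κ v₁ ≠ κ v₂) := by
    rw [insert_split G _ h₃ e312 κ, hs3]
  have hP12 : (∀ u w, (G.deleteEdges {s(v₁, v₂)}).Adj u w → κ u ≠ κ w) ↔
      (((∀ u w, (G.deleteEdges {s(v, v₁), s(v, v₂), s(v₁, v₂)}).Adj u w → κ u ≠ κ w) ∧
        κ v ≠ κ v₂) ∧ κ v ≠ κ v₁) := by
    rw [insert_split G _ h₁ e13 κ, hP2]
  have hPG : (∀ u w, G.Adj u w → κ u ≠ κ w) ↔
      ((((∀ u w, (G.deleteEdges {s(v, v₁), s(v, v₂), s(v₁, v₂)}).Adj u w → κ u ≠ κ w) ∧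
        κ v ≠ κ v₂) ∧ κ v ≠ κ v₁) ∧ κ v₁ ≠ κ v₂) := by
    rw [single_split G h₃ κ, hP12]
  rw [if_congr hPG rfl rfl]
  simp only [hP12, hP1, hP2, hP3]
  by_cases hQ : (∀ u w, (G.deleteEdges {s(v, v₁), s(v, v₂), s(v₁, v₂)}).Adj u w → κ u ≠ κ w)
  · by_cases ha : κ v ≠ κ v₁ <;> by_cases hb : κ v ≠ κ v₂ <;> by_cases hc : κ v₁ ≠ κ v₂ <;>
      first
      | exact absurd ((not_ne_iff.mp hb).trans (not_ne_iff.mp hc).symm) ha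
      | exact absurd ((not_ne_iff.mp ha).trans (not_ne_iff.mp hc)) hb
      | exact absurd ((not_ne_iff.mp ha).symm.trans (not_ne_iff.mp hb)) hc
      | (simp only [eq_true hQ, true_and]
         simp [ha, hb, hc]
         try ring)
  · simp only [eq_false hQ, false_and, if_false, ite_false]
    ring
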